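/- The only string module over B(n) that is not thin is M(β_{n-1}α_{n-1}); equivalently, for every string w on (Q(n), I(n)) other than β_{n-1}α_{n-1} and its formal inverse, the function f_w is injective, so each fiber f_w^{-1}(j) has at most one element. -/

import Mathlib

/-!  Combinatorics of walks and strings on the quiver `Q(n)` with relations `I(n)`.

`Q(n)` has vertices `0,…,n` and arrows `α i : i+1 → i` and `β i : i → i+1`
for `0 ≤ i ≤ n-1`.  A letter is an arrow or a formal inverse of an arrow. -/

/-- A letter of a walk on `Q(n)`: an arrow `α i` or `β i`, or a formal
inverse `α i *` (`ia i`) or `β i *` (`ib i`). -/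
inductive Letter where
  | a (i : ℕ)   -- the arrow `α i : i+1 → i`
  | b (i : ℕ)   -- the arrow `β i : i → i+1`
  | ia (i : ℕ)  -- the formal inverse of `α i`
  | ib (i : ℕ)  -- the formal inverse of `β i`
  deriving DecidableEq

namespace Letter

/-- The `*`-operation on letters (formal inversion). -/
def star : Letter → Letter
  | a i => ia i
  | ia i => a i
  | b i => ib i
  | ib i => b i

/-- Source of a letter. -/
def src : Letter → ℕ
  | a i => i + 1
  | ia i => i
  | b i => i
  | ib i => i + 1

/-- Target of a letter. -/
def tgt : Letter → ℕ
  | a i => i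
  | ia i => i + 1
  | b i => i + 1
  | ib i => i

/-- Whether a letter is an honest arrow of `Q(n)` (not a formal inverse). -/
def honest : Letter → Bool
  | a _ => true
  | b _ => true
  | ia _ => false
  | ib _ => false

/-- Whether a letter is a letter of the quiver `Q(n)` (arrows `α i, β i` only
exist for `i < n`). -/
def valid (n : ℕ) : Letter → Prop
  | a i => i < n
  | b i => i < n
  | ia i => i < n
  | ib i => i < n

end Letter

open Letter

/-- A walk `γ₁γ₂…γₘ` on `Q(n)`, encoded as the list `[γ₁, …, γₘ]`:
all letters exist in `Q(n)` and `t (γ_{k+1}) = s (γ_k)` for consecutive letters. -/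
def IsWalk (n : ℕ) (w : List Letter) : Prop :=
  (∀ c ∈ w, c.valid n) ∧ w.Chain' (fun c d => d.tgt = c.src)

/-- A walk is reduced if no letter is immediately followed by its formal inverse:
`γ_k ≠ γ_{k+1}*`. -/
def IsReducedWalk (w : List Letter) : Prop :=
  w.Chain' (fun c d => c ≠ d.star)

/-- The formal inverse `w* = γₘ* … γ₁*` of a walk `w = γ₁…γₘ`. -/
def starWalk (w : List Letter) : List Letter :=
  (w.map Letter.star).reverse

/-- The source `s(w) = s(γₘ)` of a (nonempty) walk. -/
def walkSrc (w : List Letter) : ℕ := (w.getLastD (Letter.a 0)).src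

/-- The function `f_w : {0,…,m} → {0,…,n}` attached to a walk `w = γ₁…γₘ`:
`f_w 0 = s(γₘ)` and `f_w j = t(γ_{m-j+1})` for `1 ≤ j ≤ m`. -/
def fW (w : List Letter) (j : ℕ) : ℕ :=
  if j = 0 then (w.getLastD (Letter.a 0)).src
  else ((w.getD (w.length - j) (Letter.a 0))).tgt

/-- The target `t(w) = t(γ₁)` of a (nonempty) walk. -/
def walkTgt (w : List Letter) : ℕ := fW w w.length

/-- The length-two paths which are monomials appearing in the generators of the
ideal `I(n)`: `α i · α (i+1)`, `β (i+1) · β i`, `α j · β j` (coming from `α 0 β 0`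
and from the binomial relations `β i α i - α (i+1) β (i+1)`, `0 ≤ i ≤ n-2`), and
`β i · α i` for `0 ≤ i ≤ n-2`.  A pair `(x, y)` stands for the path `x y`
(first traverse `y`, then `x`). -/
def ForbiddenPair (n : ℕ) (x y : Letter) : Prop :=
  (∃ i, x = Letter.a i ∧ y = Letter.a (i + 1)) ∨
  (∃ i, x = Letter.b (i + 1) ∧ y = Letter.b i) ∨
  (∃ j, x = Letter.a j ∧ y = Letter.b j) ∨
  (∃ i, i + 2 ≤ n ∧ x = Letter.b i ∧ y = Letter.a i)

/-- A string on `(Q(n), I(n))`: a reduced walk such that no path contained in it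
(i.e. no contiguous subword of `w` consisting of honest arrows, and no formal
inverse of such a subword) is a monomial appearing in a generator of `I(n)`.
Since all monomials appearing in the generators of `I(n)` have length two, this
amounts to forbidding the pairs of `ForbiddenPair` in both orientations. -/
def IsString (n : ℕ) (w : List Letter) : Prop :=
  IsWalk n w ∧ IsReducedWalk w ∧
    ∀ x y : Letter, [x, y] <:+: w →
      ¬ ForbiddenPair n x y ∧ ¬ ForbiddenPair n y.star x.star

/-- An alternating walk: `γ_k` is an honest arrow iff `γ_{k+1}` is a formal
inverse, for all `k < m`. -/
def IsAlternating (w : List Letter) : Prop :=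
  w.Chain' (fun c d => c.honest = !d.honest)

/-- A path on `Q(n)`: a walk all of whose letters are honest arrows. -/
def IsPath (n : ℕ) (p : List Letter) : Prop :=
  IsWalk n p ∧ ∀ c ∈ p, c.honest = true

/-- The `h`-fold concatenation `w^h` of a walk with itself. -/
def powWalk (w : List Letter) (h : ℕ) : List Letter :=
  (List.replicate h w).flatten

/-! ### Auxiliary material for Statement 12 -/

/-- Whether traversing a letter increases the vertex by one (`β i` or `α i *`);
otherwise it decreases it by one. -/
def incL : Letter → Bool
  | .b _ => true
  | .ia _ => true
  | _ => false

lemma incL_src_tgt (c : Letter) :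
    (incL c = true → c.tgt = c.src + 1) ∧ (incL c = false → c.src = c.tgt + 1) := by
  cases c <;> simp [incL, Letter.src, Letter.tgt]

lemma getLastD_eq_getD (w : List Letter) (d : Letter) (h : w ≠ []) :
    w.getLastD d = w.getD (w.length - 1) d := by
  induction w with
  | nil => simp at h
  | cons a t ih =>
    cases t with
    | nil => rfl
    | cons b t' =>
      rw [show (a :: b :: t').getLastD d = (b :: t').getLastD d from rfl, ih (by simp)]
      simp [List.getD]

lemma pair_conds {n : ℕ} {w : List Letter} (hw : IsString n w) {x y : Letter}
    (h : [x, y] <:+: w) :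
    x.valid n ∧ y.valid n ∧ y.tgt = x.src ∧ x ≠ y.star ∧
      ¬ ForbiddenPair n x y ∧ ¬ ForbiddenPair n y.star x.star := by
  obtain ⟨⟨hv, hc⟩, hr, hf⟩ := hw
  have hsub := h.subset
  have hcxy : List.Chain' (fun c d => d.tgt = c.src) [x, y] := hc.infix h
  have hrxy : List.Chain' (fun c d => c ≠ d.star) [x, y] := hr.infix h
  exact ⟨hv x (hsub (by simp)), hv y (hsub (by simp)), (List.isChain_pair (R := fun (c d : Letter) => d.tgt = c.src)).1 hcxy,
    (List.isChain_pair (R := fun (c d : Letter) => c ≠ d.star)).1 hrxy, (hf x y h).1, (hf x y h).2⟩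

lemma pairA {n : ℕ} {x y : Letter} (hx : x.valid n) (hy : y.valid n)
    (hc : y.tgt = x.src) (hr : x ≠ y.star)
    (hf1 : ¬ ForbiddenPair n x y) (hf2 : ¬ ForbiddenPair n y.star x.star)
    (hd : ¬ incL x = incL y) :
    (x = .b (n - 1) ∧ y = .a (n - 1)) ∨ (x = .ia (n - 1) ∧ y = .ib (n - 1)) := by
  cases x <;> cases y <;>
    simp_all [incL, Letter.valid, Letter.tgt, Letter.src, Letter.star, ForbiddenPair] <;>
    omega

lemma isolated₁ {n : ℕ} (hn : 1 ≤ n) {w s t : List Letter} (hw : IsString n w)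
    (he : w = s ++ [Letter.b (n - 1), Letter.a (n - 1)] ++ t) :
    w = [Letter.b (n - 1), Letter.a (n - 1)] := by
  have hs : s = [] := by
    rcases List.eq_nil_or_concat s with h | ⟨s', u, rfl⟩
    · exact h
    · exfalso
      have hinf : [u, Letter.b (n - 1)] <:+: w :=
        ⟨s', Letter.a (n - 1) :: t, by simp [he]⟩
      obtain ⟨hvu, hv2, hc, hr, hf1, hf2⟩ := pair_conds hw hinf
      cases u <;>
        simp_all [Letter.valid, Letter.tgt, Letter.src, Letter.star, ForbiddenPair] <;>
        omega
  have ht : t = [] := by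
    cases t with
    | nil => rfl
    | cons z t' =>
      exfalso
      have hinf : [Letter.a (n - 1), z] <:+: w :=
        ⟨s ++ [Letter.b (n - 1)], t', by simp [he]⟩
      obtain ⟨hv1, hvz, hc, hr, hf1, hf2⟩ := pair_conds hw hinf
      cases z <;>
        simp_all [Letter.valid, Letter.tgt, Letter.src, Letter.star, ForbiddenPair] <;>
        omega
  simp [he, hs, ht]

lemma isolated₂ {n : ℕ} (hn : 1 ≤ n) {w s t : List Letter} (hw : IsString n w)
    (he : w = s ++ [Letter.ia (n - 1), Letter.ib (n - 1)] ++ t) :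
    w = [Letter.ia (n - 1), Letter.ib (n - 1)] := by
  have hs : s = [] := by
    rcases List.eq_nil_or_concat s with h | ⟨s', u, rfl⟩
    · exact h
    · exfalso
      have hinf : [u, Letter.ia (n - 1)] <:+: w :=
        ⟨s', Letter.ib (n - 1) :: t, by simp [he]⟩
      obtain ⟨hvu, hv2, hc, hr, hf1, hf2⟩ := pair_conds hw hinf
      cases u <;>
        simp_all [Letter.valid, Letter.tgt, Letter.src, Letter.star, ForbiddenPair] <;>
        omega
  have ht : t = [] := by
    cases t with
    | nil => rfl
    | cons z t' =>
      exfalso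
      have hinf : [Letter.ib (n - 1), z] <:+: w :=
        ⟨s ++ [Letter.ia (n - 1)], t', by simp [he]⟩
      obtain ⟨hv1, hvz, hc, hr, hf1, hf2⟩ := pair_conds hw hinf
      cases z <;>
        simp_all [Letter.valid, Letter.tgt, Letter.src, Letter.star, ForbiddenPair] <;>
        omega
  simp [he, hs, ht]

lemma chain'_of_pairs {P : Letter → Letter → Prop} :
    ∀ (w : List Letter), (∀ x y, [x, y] <:+: w → P x y) → w.Chain' P
  | [], _ => List.isChain_nil
  | [_], _ => List.isChain_singleton _
  | (c :: d :: t), h => by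
    show List.IsChain _ _
    rw [List.isChain_cons_cons]
    exact ⟨h c d ⟨[], t, rfl⟩,
      chain'_of_pairs (d :: t) (fun x y hxy => h x y (List.infix_cons hxy))⟩

lemma allEqHead {p : Letter → Bool} :
    ∀ (c : Letter) (t : List Letter), (c :: t).Chain' (fun c d => p c = p d) →
      ∀ x ∈ c :: t, p x = p c
  | _, [], _, _, hx => by simp_all
  | c, d :: t, h, x, hx => by
    change List.IsChain _ _ at h
    rw [List.isChain_cons_cons] at h
    rcases List.mem_cons.1 hx with rfl | hx
    · rfl
    · rw [allEqHead d t h.2 x hx, h.1]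

lemma fW_step {n : ℕ} {w : List Letter} (hw : IsWalk n w) {j : ℕ} (hj : j < w.length) :
    fW w j = (w.getD (w.length - 1 - j) (Letter.a 0)).src ∧
    fW w (j + 1) = (w.getD (w.length - 1 - j) (Letter.a 0)).tgt := by
  constructor
  · rcases Nat.eq_zero_or_pos j with rfl | hj1
    · show (w.getLastD _).src = _
      rw [getLastD_eq_getD w _ (by intro h; simp [h] at hj)]
      simp
    · have hj0 : j ≠ 0 := by omega
      rw [fW, if_neg hj0]
      have hchain := hw.2
      change List.IsChain _ _ at hchain
      rw [List.isChain_iff_getElem] at hchain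
      have hi : w.length - 1 - j < w.length - 1 := by omega
      have hrel := hchain (w.length - 1 - j) (by omega)
      rw [show w.length - j = (w.length - 1 - j) + 1 from by omega,
        List.getD_eq_getElem w _ (by omega), List.getD_eq_getElem w _ (by omega)]
      exact hrel
  · rw [fW, if_neg (Nat.succ_ne_zero j),
      show w.length - (j + 1) = w.length - 1 - j from by omega]


/-- for every string `w` on `(Q(n), I(n))` other than
`β_{n-1} α_{n-1}` and its formal inverse `α_{n-1}* β_{n-1}*`, the function `f_w`
is injective on its domain `{0,…,m}`, so each fiber `f_w⁻¹(j)` has at most one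
element; equivalently, the only non-thin string module is
`M(β_{n-1} α_{n-1})`. -/
theorem stmt_12 (n : ℕ) (hn : 1 ≤ n) (w : List Letter) (hw : IsString n w)
    (h1 : w ≠ [Letter.b (n - 1), Letter.a (n - 1)])
    (h2 : w ≠ [Letter.ia (n - 1), Letter.ib (n - 1)]) :
    Set.InjOn (fW w) (Set.Iic w.length) := by
  have hchain : w.Chain' (fun c d => incL c = incL d) := by
    apply chain'_of_pairs
    intro x y hxy
    by_contra hd
    obtain ⟨hvx, hvy, hc, hr, hf1, hf2⟩ := pair_conds hw hxy
    rcases pairA hvx hvy hc hr hf1 hf2 hd with ⟨rfl, rfl⟩ | ⟨rfl, rfl⟩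
    · obtain ⟨s, t, he⟩ := hxy
      exact h1 (isolated₁ hn hw he.symm)
    · obtain ⟨s, t, he⟩ := hxy
      exact h2 (isolated₂ hn hw he.symm)
  rcases Nat.eq_zero_or_pos w.length with hm | hm
  · intro i hi j hj _
    simp only [Set.mem_Iic, hm, Nat.le_zero] at hi hj
    omega
  have hmem : ∀ j, j < w.length → w.getD (w.length - 1 - j) (Letter.a 0) ∈ w := by
    intro j hj
    rw [List.getD_eq_getElem w _ (by omega)]
    exact List.getElem_mem _
  obtain ⟨c₀, t₀, hw0⟩ : ∃ c t, w = c :: t := by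
    cases w with
    | nil => simp at hm
    | cons c t => exact ⟨c, t, rfl⟩
  have hall : ∀ x ∈ w, incL x = incL c₀ := by
    rw [hw0] at hchain ⊢
    exact allEqHead c₀ t₀ hchain
  cases hb : incL c₀ with
  | true =>
    have hstep : ∀ j, j < w.length → fW w (j + 1) = fW w j + 1 := by
      intro j hj
      obtain ⟨hsrc, htgt⟩ := fW_step hw.1 hj
      have hinc : incL (w.getD (w.length - 1 - j) (Letter.a 0)) = true := by
        rw [hall _ (hmem j hj), hb]
      rw [hsrc, htgt, (incL_src_tgt _).1 hinc]
    have key : ∀ d i, i + d ≤ w.length → fW w (i + d) = fW w i + d := by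
      intro d
      induction d with
      | zero => simp
      | succ d ih =>
        intro i hi
        rw [show i + (d + 1) = (i + d) + 1 from by omega,
          hstep (i + d) (by omega), ih i (by omega)]
        omega
    intro i hi j hj hij
    simp only [Set.mem_Iic] at hi hj
    rcases le_total i j with h | h
    · have hk := key (j - i) i (by omega)
      rw [show i + (j - i) = j from by omega] at hk
      omega
    · have hk := key (i - j) j (by omega)
      rw [show j + (i - j) = i from by omega] at hk
      omega
  | false =>
    have hstep : ∀ j, j < w.length → fW w j = fW w (j + 1) + 1 := by
      intro j hj
      obtain ⟨hsrc, htgt⟩ := fW_step hw.1 hj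
      have hinc : incL (w.getD (w.length - 1 - j) (Letter.a 0)) = false := by
        rw [hall _ (hmem j hj), hb]
      rw [hsrc, htgt, (incL_src_tgt _).2 hinc]
    have key : ∀ d i, i + d ≤ w.length → fW w i = fW w (i + d) + d := by
      intro d
      induction d with
      | zero => simp
      | succ d ih =>
        intro i hi
        have h1 := hstep (i + d) (by omega)
        have h2 := ih i (by omega)
        rw [show i + (d + 1) = (i + d) + 1 from by omega]
        omega
    intro i hi j hj hij
    simp only [Set.mem_Iic] at hi hj
    rcases le_total i j with h | h
    · have hk := key (j - i) i (by omega)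
      rw [show i + (j - i) = j from by omega] at hk
      omega
    · have hk := key (i - j) j (by omega)
      rw [show j + (i - j) = i from by omega] at hk
      omega
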